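/- Let P > 0, N₀ > 0, η ∈ (0,1], β ∈ (0,1), δ > 1, and let X and W be independent exponential random variables with means λ_SR > 0 and λ_RD > 0. Define ν(x) = (1−β)·( ηβPx/(N₀(ηβx + (1−β))) − Pδ/(P(1−β)x + N₀) ) and θ₁ = [ (δ−1)/(1−β) + √( ((δ−1)/(1−β))² + 4δP/(ηβN₀) ) ] / (2P/N₀). Then the secrecy outage probability of the PS policy satisfies ℙ( (1 + ηβ(1−β)P·X·W/(N₀(ηβW + (1−β)))) / (1 + (1−β)P·X/((1−β)P·W + N₀)) < δ ) = 1 − (1/λ_RD)·∫_{θ₁}^{∞} exp( −(δ−1)/(ν(x)·λ_SR) − x/λ_RD ) dx. -/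

import Mathlib

open MeasureTheory ProbabilityTheory Real

lemma expMeasure_Iic_zero {r : ℝ} (hr : 0 < r) : expMeasure r (Set.Iic 0) = 0 := by
  rw [show expMeasure r = volume.withDensity (exponentialPDF r) from rfl,
    withDensity_apply _ measurableSet_Iic, lintegral_exponentialPDF_eq_antiDeriv hr 0]
  simp

lemma expMeasure_Iic {r c : ℝ} (hr : 0 < r) (hc : 0 ≤ c) :
    expMeasure r (Set.Iic c) = ENNReal.ofReal (1 - rexp (-(r * c))) := by
  rw [show expMeasure r = volume.withDensity (exponentialPDF r) from rfl,
    withDensity_apply _ measurableSet_Iic, lintegral_exponentialPDF_eq_antiDeriv hr c, if_pos hc]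

lemma expMeasure_Ici {r c : ℝ} (hr : 0 < r) (hc : 0 ≤ c) :
    expMeasure r (Set.Ici c) = ENNReal.ofReal (rexp (-(r * c))) := by
  have hprob : IsProbabilityMeasure (expMeasure r) := isProbabilityMeasure_expMeasure hr
  have hs : expMeasure r {c} = 0 := by
    rw [show expMeasure r = volume.withDensity (exponentialPDF r) from rfl]
    exact (withDensity_absolutelyContinuous _ _) (measure_singleton c)
  have hIio : expMeasure r (Set.Iio c) = ENNReal.ofReal (1 - rexp (-(r * c))) := by
    rw [measure_congr (Iio_ae_eq_Iic' hs)]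
    exact expMeasure_Iic hr hc
  have := measure_compl (μ := expMeasure r) (measurableSet_Iio (a := c)) (measure_ne_top _ _)
  rw [Set.compl_Iio, hIio, measure_univ] at this
  rw [this, ← ENNReal.ofReal_one, ← ENNReal.ofReal_sub]
  · ring_nf
  · have : rexp (-(r * c)) ≤ 1 := exp_le_one_iff.2 (by nlinarith)
    linarith

lemma theta1_pos {P N0 η β δ θ1 : ℝ} (hP : 0 < P) (hN0 : 0 < N0)
    (hη0 : 0 < η) (hβ0 : 0 < β) (hβ1 : β < 1) (hδ : 1 < δ)
    (hθ1 : θ1 = ((δ - 1) / (1 - β)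
        + Real.sqrt (((δ - 1) / (1 - β)) ^ 2 + 4 * δ * P / (η * β * N0))) / (2 * (P / N0))) :
    0 < θ1 := by
  have hβ' : 0 < 1 - β := by linarith
  have hs : 0 < (δ - 1) / (1 - β) := div_pos (by linarith) hβ'
  have hS := Real.sqrt_nonneg (((δ - 1) / (1 - β)) ^ 2 + 4 * δ * P / (η * β * N0))
  have hden : 0 < 2 * (P / N0) := by positivity
  rw [hθ1]
  exact div_pos (by linarith) hden

lemma quad_root {P N0 η β δ θ1 : ℝ} (hP : 0 < P) (hN0 : 0 < N0)
    (hη0 : 0 < η) (hβ0 : 0 < β) (hβ1 : β < 1) (hδ : 1 < δ)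
    (hθ1 : θ1 = ((δ - 1) / (1 - β)
        + Real.sqrt (((δ - 1) / (1 - β)) ^ 2 + 4 * δ * P / (η * β * N0))) / (2 * (P / N0))) :
    η * β * P * (1 - β) * θ1 ^ 2 - η * β * N0 * (δ - 1) * θ1 - δ * N0 * (1 - β) = 0 := by
  have hβ' : 0 < 1 - β := by linarith
  have hkarg : 0 ≤ ((δ - 1) / (1 - β)) ^ 2 + 4 * δ * P / (η * β * N0) := by positivity
  set S := Real.sqrt (((δ - 1) / (1 - β)) ^ 2 + 4 * δ * P / (η * β * N0)) with hSdef
  have hS2 : S ^ 2 = ((δ - 1) / (1 - β)) ^ 2 + 4 * δ * P / (η * β * N0) := Real.sq_sqrt hkarg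
  have hS2' : S ^ 2 * ((1 - β) ^ 2 * (η * β * N0)) =
      (δ - 1) ^ 2 * (η * β * N0) + 4 * δ * P * (1 - β) ^ 2 := by
    field_simp at hS2
    linarith [hS2]
  rw [hθ1]
  have h1b : (1 - β) ≠ 0 := hβ'.ne'
  field_simp
  linear_combination N0 * hS2'

lemma quad_pos_iff {A B C t w : ℝ} (hA : 0 < A) (hC : 0 < C) (ht : 0 < t)
    (hq0 : A * t ^ 2 - B * t - C = 0) (hw : 0 < w) :
    0 < A * w ^ 2 - B * w - C ↔ t < w := by
  have ha : 0 < A * t - B := by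
    by_contra hc
    push_neg at hc
    nlinarith [mul_nonpos_of_nonneg_of_nonpos ht.le hc]
  have hfac : (0:ℝ) < A * (w + t) - B := by nlinarith [mul_pos hA hw]
  constructor
  · intro hq
    by_contra hle
    push_neg at hle
    nlinarith [mul_nonneg (sub_nonneg.2 hle) hfac.le]
  · intro h
    nlinarith [mul_pos (sub_pos.2 h) hfac]

lemma nu_pos_iff {P N0 η β δ : ℝ} (hP : 0 < P) (hN0 : 0 < N0)
    (hη0 : 0 < η) (hβ0 : 0 < β) (hβ1 : β < 1) (hδ : 1 < δ)
    (ν : ℝ → ℝ)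
    (hν : ∀ x, ν x = (1 - β) * (η * β * P * x / (N0 * (η * β * x + (1 - β)))
        - P * δ / (P * (1 - β) * x + N0)))
    (θ1 : ℝ)
    (hθ1 : θ1 = ((δ - 1) / (1 - β)
        + Real.sqrt (((δ - 1) / (1 - β)) ^ 2 + 4 * δ * P / (η * β * N0))) / (2 * (P / N0)))
    {w : ℝ} (hw : 0 < w) : 0 < ν w ↔ θ1 < w := by
  have hβ' : 0 < 1 - β := by linarith
  have hδ' : 0 < δ - 1 := by linarith
  set A := η * β * P * (1 - β) with hA
  set B := η * β * N0 * (δ - 1) with hB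
  set C := δ * N0 * (1 - β) with hC
  have hApos : 0 < A := by rw [hA]; positivity
  have hCpos : 0 < C := by rw [hC]; positivity
  have hθpos : 0 < θ1 := theta1_pos hP hN0 hη0 hβ0 hβ1 hδ hθ1
  have hq0 : A * θ1 ^ 2 - B * θ1 - C = 0 := quad_root hP hN0 hη0 hβ0 hβ1 hδ hθ1
  have hD1 : 0 < N0 * (η * β * w + (1 - β)) := by positivity
  have hD2 : 0 < P * (1 - β) * w + N0 := by positivity
  have hrel : ν w * (N0 * (η * β * w + (1 - β)) * (P * (1 - β) * w + N0))
      = (1 - β) * P * (A * w ^ 2 - B * w - C) := by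
    rw [hν, hA, hB, hC]
    field_simp
    ring
  have hqiff : 0 < ν w ↔ 0 < A * w ^ 2 - B * w - C := by
    constructor
    · intro h
      have h1 : 0 < ν w * (N0 * (η * β * w + (1 - β)) * (P * (1 - β) * w + N0)) :=
        mul_pos h (mul_pos hD1 hD2)
      rw [hrel] at h1
      by_contra hc
      push_neg at hc
      nlinarith [mul_nonneg (mul_pos hβ' hP).le (neg_nonneg.2 hc)]
    · intro h
      have h1 : 0 < (1 - β) * P * (A * w ^ 2 - B * w - C) := by positivity
      rw [← hrel] at h1
      by_contra hc
      push_neg at hc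
      nlinarith [mul_nonneg (neg_nonneg.2 hc) (mul_pos hD1 hD2).le]
  rw [hqiff]
  exact quad_pos_iff hApos hCpos hθpos hq0 hw

lemma event_iff {P N0 η β δ : ℝ} (hP : 0 < P) (hN0 : 0 < N0)
    (hη0 : 0 < η) (hβ0 : 0 < β) (hβ1 : β < 1) (hδ : 1 < δ)
    (ν : ℝ → ℝ)
    (hν : ∀ x, ν x = (1 - β) * (η * β * P * x / (N0 * (η * β * x + (1 - β)))
        - P * δ / (P * (1 - β) * x + N0)))
    {x w : ℝ} (hx : 0 < x) (hw : 0 < w) :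
    (1 + η * β * (1 - β) * P * x * w / (N0 * (η * β * w + (1 - β)))) /
        (1 + (1 - β) * P * x / ((1 - β) * P * w + N0)) < δ ↔ ν w * x < δ - 1 := by
  have hβ' : 0 < 1 - β := by linarith
  have hD1 : 0 < N0 * (η * β * w + (1 - β)) := by positivity
  have hD2 : 0 < (1 - β) * P * w + N0 := by positivity
  have hden : 0 < 1 + (1 - β) * P * x / ((1 - β) * P * w + N0) := by positivity
  rw [div_lt_iff₀ hden]
  have key : δ * (1 + (1 - β) * P * x / ((1 - β) * P * w + N0))
      - (1 + η * β * (1 - β) * P * x * w / (N0 * (η * β * w + (1 - β))))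
      = (δ - 1) - ν w * x := by
    rw [hν]
    field_simp
    ring
  constructor <;> intro h <;> linarith

/-- **Secrecy outage probability of the PS policy (Proposition 1).** With `X = |h_SR|²` and
`W = |h_RD|²` independent exponentials with means `λ_SR, λ_RD`, the high-SNR secrecy outage
probability equals `1 - (1/λ_RD) ∫_{θ₁}^∞ exp(-(δ-1)/(ν(x) λ_SR) - x/λ_RD) dx`. -/
theorem secrecy_outage_PS
    {Ω : Type*} [MeasurableSpace Ω] (μ : Measure Ω) [IsProbabilityMeasure μ]
    (X W : Ω → ℝ) (hXm : Measurable X) (hWm : Measurable W)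
    (hindep : IndepFun X W μ)
    (lamSR lamRD : ℝ) (hlamSR : 0 < lamSR) (hlamRD : 0 < lamRD)
    (hX : Measure.map X μ = expMeasure lamSR⁻¹)
    (hW : Measure.map W μ = expMeasure lamRD⁻¹)
    (P N0 η β δ : ℝ) (hP : 0 < P) (hN0 : 0 < N0)
    (hη0 : 0 < η) (hη1 : η ≤ 1) (hβ0 : 0 < β) (hβ1 : β < 1) (hδ : 1 < δ)
    (ν : ℝ → ℝ)
    (hν : ∀ x, ν x = (1 - β) * (η * β * P * x / (N0 * (η * β * x + (1 - β)))
        - P * δ / (P * (1 - β) * x + N0)))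
    (θ1 : ℝ)
    (hθ1 : θ1 = ((δ - 1) / (1 - β)
        + Real.sqrt (((δ - 1) / (1 - β)) ^ 2 + 4 * δ * P / (η * β * N0))) / (2 * (P / N0))) :
    (μ {ω | (1 + η * β * (1 - β) * P * X ω * W ω / (N0 * (η * β * W ω + (1 - β)))) /
        (1 + (1 - β) * P * X ω / ((1 - β) * P * W ω + N0)) < δ}).toReal =
      1 - (1 / lamRD) * ∫ x in Set.Ioi θ1,
        Real.exp (-(δ - 1) / (ν x * lamSR) - x / lamRD) := by
  have hβ' : 0 < 1 - β := by linarith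
  have hδ' : 0 < δ - 1 := by linarith
  have hr1 : 0 < lamSR⁻¹ := by positivity
  have hr2 : 0 < lamRD⁻¹ := by positivity
  have hθpos : 0 < θ1 := theta1_pos hP hN0 hη0 hβ0 hβ1 hδ hθ1
  haveI h1prob : IsProbabilityMeasure (expMeasure lamSR⁻¹) := isProbabilityMeasure_expMeasure hr1
  haveI h2prob : IsProbabilityMeasure (expMeasure lamRD⁻¹) := isProbabilityMeasure_expMeasure hr2
  -- measurability of ν
  have hνm : Measurable ν := by
    have hνeq : ν = fun x => (1 - β) * (η * β * P * x / (N0 * (η * β * x + (1 - β)))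
        - P * δ / (P * (1 - β) * x + N0)) := funext hν
    rw [hνeq]
    exact measurable_const.mul
      (((measurable_const.mul measurable_id).div
          (measurable_const.mul ((measurable_const.mul measurable_id).add measurable_const))).sub
        (measurable_const.div ((measurable_const.mul measurable_id).add measurable_const)))
  -- a.e. positivity
  have hXpos : ∀ᵐ ω ∂μ, 0 < X ω := by
    rw [ae_iff]
    have hset : {ω | ¬ 0 < X ω} = X ⁻¹' (Set.Iic 0) := by ext ω; simp [not_lt]
    rw [hset, ← Measure.map_apply hXm measurableSet_Iic, hX, expMeasure_Iic_zero hr1]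
  have hWpos : ∀ᵐ ω ∂μ, 0 < W ω := by
    rw [ae_iff]
    have hset : {ω | ¬ 0 < W ω} = W ⁻¹' (Set.Iic 0) := by ext ω; simp [not_lt]
    rw [hset, ← Measure.map_apply hWm measurableSet_Iic, hW, expMeasure_Iic_zero hr2]
  -- target set T
  have hT : True := trivial
  have hTm : MeasurableSet {p : ℝ × ℝ | δ - 1 ≤ ν p.2 * p.1} :=
    measurableSet_le measurable_const ((hνm.comp measurable_snd).mul measurable_fst)
  have hFm : MeasurableSet ((fun ω => (X ω, W ω)) ⁻¹' {p : ℝ × ℝ | δ - 1 ≤ ν p.2 * p.1}) := (hXm.prodMk hWm) hTm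
  -- the event equals the complement of the preimage of T, a.e.
  have hEae : {ω | (1 + η * β * (1 - β) * P * X ω * W ω / (N0 * (η * β * W ω + (1 - β)))) /
        (1 + (1 - β) * P * X ω / ((1 - β) * P * W ω + N0)) < δ}
      =ᵐ[μ] (((fun ω => (X ω, W ω)) ⁻¹' {p : ℝ × ℝ | δ - 1 ≤ ν p.2 * p.1})ᶜ : Set Ω) := by
    rw [Filter.eventuallyEq_set]
    filter_upwards [hXpos, hWpos] with ω hx hw
    have h := event_iff hP hN0 hη0 hβ0 hβ1 hδ ν hν hx hw
    exact h.trans not_le.symm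
  -- joint law
  have hmap : μ.map (fun ω => (X ω, W ω)) = (expMeasure lamSR⁻¹).prod (expMeasure lamRD⁻¹) := by
    rw [← hX, ← hW]
    exact (indepFun_iff_map_prod_eq_prod_map_map hXm.aemeasurable hWm.aemeasurable).1 hindep
  -- compute the measure of the preimage of T
  have hW2pos : ∀ᵐ w ∂(expMeasure lamRD⁻¹), 0 < w := by
    rw [ae_iff]
    have hset : {w : ℝ | ¬ 0 < w} = Set.Iic 0 := by ext w; simp [not_lt]
    rw [hset, expMeasure_Iic_zero hr2]
  have hslice : ∀ w : ℝ, 0 < w → expMeasure lamSR⁻¹ ((fun x => (x, w)) ⁻¹' {p : ℝ × ℝ | δ - 1 ≤ ν p.2 * p.1})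
      = (Set.Ioi θ1).indicator
          (fun w => ENNReal.ofReal (rexp (-((δ - 1) / (ν w * lamSR))))) w := by
    intro w hw
    by_cases hwθ : θ1 < w
    · have hνw : 0 < ν w := (nu_pos_iff hP hN0 hη0 hβ0 hβ1 hδ ν hν θ1 hθ1 hw).2 hwθ
      have hsets : ((fun x => (x, w)) ⁻¹' {p : ℝ × ℝ | δ - 1 ≤ ν p.2 * p.1}) = Set.Ici ((δ - 1) / ν w) := by
        ext x
        simp only [Set.mem_preimage, Set.mem_setOf_eq, Set.mem_Ici,
          div_le_iff₀ hνw, mul_comm]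
      have hc : 0 ≤ (δ - 1) / ν w := div_nonneg hδ'.le hνw.le
      rw [hsets, expMeasure_Ici hr1 hc, Set.indicator_of_mem (Set.mem_Ioi.2 hwθ)]
      congr 2
      field_simp [hνw.ne', hlamSR.ne']
    · have hνw : ν w ≤ 0 := by
        by_contra hc
        push_neg at hc
        exact hwθ ((nu_pos_iff hP hN0 hη0 hβ0 hβ1 hδ ν hν θ1 hθ1 hw).1 hc)
      rw [Set.indicator_of_notMem (by simpa using hwθ)]
      refine measure_mono_null ?_ (expMeasure_Iic_zero hr1)
      intro x hx
      simp only [Set.mem_preimage, Set.mem_setOf_eq] at hx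
      simp only [Set.mem_Iic]
      by_contra hx0
      push_neg at hx0
      nlinarith [mul_nonpos_of_nonpos_of_nonneg hνw hx0.le]
  have hμF : μ ((fun ω => (X ω, W ω)) ⁻¹' {p : ℝ × ℝ | δ - 1 ≤ ν p.2 * p.1})
      = ∫⁻ w in Set.Ioi θ1,
          ENNReal.ofReal (lamRD⁻¹ * rexp (-(δ - 1) / (ν w * lamSR) - w / lamRD)) := by
    rw [← Measure.map_apply (hXm.prodMk hWm) hTm, hmap, Measure.prod_apply_symm hTm]
    rw [lintegral_congr_ae (g := (Set.Ioi θ1).indicator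
        (fun w => ENNReal.ofReal (rexp (-((δ - 1) / (ν w * lamSR))))))
      (by filter_upwards [hW2pos] with w hw using hslice w hw)]
    rw [lintegral_indicator measurableSet_Ioi]
    have hpdfm : Measurable (exponentialPDF lamRD⁻¹) :=
      (measurable_exponentialPDFReal lamRD⁻¹).ennreal_ofReal
    have hgm2 : Measurable (fun w : ℝ => ENNReal.ofReal (rexp (-((δ - 1) / (ν w * lamSR))))) :=
      ENNReal.measurable_ofReal.comp (Real.measurable_exp.comp
        ((measurable_const.div (hνm.mul measurable_const)).neg))
    rw [show expMeasure lamRD⁻¹ = volume.withDensity (exponentialPDF lamRD⁻¹) from rfl]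
    rw [setLIntegral_withDensity_eq_setLIntegral_mul volume hpdfm hgm2 measurableSet_Ioi]
    refine setLIntegral_congr_fun measurableSet_Ioi (fun w hw => ?_)
    have hw0 : 0 ≤ w := (hθpos.trans hw).le
    simp only [Pi.mul_apply]
    rw [show exponentialPDF lamRD⁻¹ w = ENNReal.ofReal (lamRD⁻¹ * rexp (-(lamRD⁻¹ * w))) from
        exponentialPDF_of_nonneg hw0,
      ← ENNReal.ofReal_mul (by positivity)]
    congr 1
    rw [mul_assoc, ← Real.exp_add]
    congr 2
    field_simp
    ring
  -- put it together
  rw [measure_congr hEae, measure_compl hFm (measure_ne_top μ _), measure_univ, hμF]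
  have hgm : Measurable fun w : ℝ => lamRD⁻¹ * rexp (-(δ - 1) / (ν w * lamSR) - w / lamRD) :=
    measurable_const.mul (Real.measurable_exp.comp
      ((measurable_const.div (hνm.mul measurable_const)).sub (measurable_id.div_const lamRD)))
  have hint : ∫ w in Set.Ioi θ1, lamRD⁻¹ * rexp (-(δ - 1) / (ν w * lamSR) - w / lamRD)
      = (∫⁻ w in Set.Ioi θ1,
          ENNReal.ofReal (lamRD⁻¹ * rexp (-(δ - 1) / (ν w * lamSR) - w / lamRD))).toReal := by
    exact integral_eq_lintegral_of_nonneg_ae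
      (Filter.Eventually.of_forall fun w => by positivity) hgm.aestronglyMeasurable
  have hle : (∫⁻ w in Set.Ioi θ1,
      ENNReal.ofReal (lamRD⁻¹ * rexp (-(δ - 1) / (ν w * lamSR) - w / lamRD))) ≤ 1 := by
    rw [← hμF]
    exact prob_le_one
  rw [ENNReal.toReal_sub_of_le hle ENNReal.one_ne_top, ENNReal.toReal_one, ← hint,
    MeasureTheory.integral_const_mul, one_div]
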